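/- Let f : [1,∞) → (0,∞) be differentiable with |d/dx ln(f(e^x))| ≤ C for some finite C. If limsup_{x→∞} ln(f(x))/ln(x) > 0, then limsup_{n→∞} ln|f(2^n) − f(2^{n−1})| / ln(n) = ∞. -/

import Mathlib

open Filter Real

noncomputable section

/-- Extended-real logarithm with the convention `ln(0) = -∞`. -/
def elog (x : ℝ) : EReal := if x = 0 then ⊥ else ((Real.log x : ℝ) : EReal)

theorem stmt8 (f : ℝ → ℝ) (C : ℝ)
    (hpos : ∀ x, 1 ≤ x → 0 < f x)
    (hdiff : ∀ x, 1 ≤ x → DifferentiableAt ℝ f x)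
    (hlip : ∀ x : ℝ, 0 ≤ x → |deriv (fun t => Real.log (f (Real.exp t))) x| ≤ C)
    (hpos' : 0 < limsup (fun x : ℝ => Real.log (f x) / Real.log x) atTop) :
    limsup (fun n : ℕ =>
        elog |f ((2 : ℝ) ^ (n : ℝ)) - f ((2 : ℝ) ^ ((n : ℝ) - 1))| / ((Real.log n : ℝ) : EReal))
      atTop = (⊤ : EReal) := by
  classical
  have hC0 : 0 ≤ C := le_trans (abs_nonneg _) (hlip 0 le_rfl)
  have hlog2 : 0 < Real.log 2 := Real.log_pos one_lt_two
  set u : ℝ → ℝ := fun x => Real.log (f x) / Real.log x with hu_def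
  -- Step A: extract a positive frequent lower bound for log f x / log x
  obtain ⟨c, hc, hfreq⟩ : ∃ c : ℝ, 0 < c ∧ ∃ᶠ x in atTop, c < u x := by
    by_cases hcb : IsCoboundedUnder (· ≤ ·) atTop u
    · exact ⟨limsup u atTop / 2, half_pos hpos',
        frequently_lt_of_lt_limsup hcb (half_lt_self hpos')⟩
    · exfalso
      have hns : ¬ BddBelow {a : ℝ | ∀ᶠ x : ℝ in atTop, u x ≤ a} := by
        rintro ⟨b, hb⟩
        refine hcb ⟨b, fun a ha => ?_⟩
        exact hb (by simpa [eventually_map] using ha)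
      have hls : limsup u atTop = 0 := by
        rw [limsup_eq, csInf_of_not_bddBelow hns, Real.sInf_empty]
      rw [hls] at hpos'
      exact lt_irrefl _ hpos'
  -- Step B: the function g t = log f (exp t) is C-Lipschitz on [0, ∞)
  set g : ℝ → ℝ := fun t => Real.log (f (Real.exp t)) with hg_def
  have hgd : ∀ t ∈ Set.Ici (0:ℝ), DifferentiableAt ℝ g t := by
    intro t ht
    have h1 : (1:ℝ) ≤ Real.exp t := Real.one_le_exp ht
    exact DifferentiableAt.log
      ((hdiff _ h1).comp t Real.differentiable_exp.differentiableAt)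
      (ne_of_gt (hpos _ h1))
  have hglip : ∀ s ∈ Set.Ici (0:ℝ), ∀ t ∈ Set.Ici (0:ℝ), |g t - g s| ≤ C * |t - s| := by
    intro s hs t ht
    have := Convex.norm_image_sub_le_of_norm_deriv_le hgd
      (fun x hx => by simpa [Real.norm_eq_abs] using hlip x hx) (convex_Ici 0) hs ht
    simpa [Real.norm_eq_abs] using this
  -- Step C: growth along dyadic points
  set c₁ : ℝ := c * Real.log 2 with hc₁_def
  have hc₁ : 0 < c₁ := mul_pos hc hlog2
  set D : ℝ := (c + C) * Real.log 2 with hD_def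
  have hgrow : ∀ K : ℕ, ∃ N : ℕ, K ≤ N ∧
      c₁ * N - D ≤ Real.log (f ((2:ℝ) ^ (N:ℝ))) := by
    intro K
    obtain ⟨x, hx, hcx⟩ := (frequently_atTop.mp hfreq) ((2:ℝ) ^ (K+1 : ℕ))
    have hpow_pos : (0:ℝ) < (2:ℝ) ^ (K+1 : ℕ) := by positivity
    have hx0 : 0 < x := lt_of_lt_of_le hpow_pos hx
    have hlx : ((K:ℝ)+1) * Real.log 2 ≤ Real.log x := by
      have h1 : Real.log ((2:ℝ) ^ (K+1 : ℕ)) ≤ Real.log x :=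
        Real.log_le_log hpow_pos hx
      rw [Real.log_pow] at h1
      push_cast at h1
      linarith
    set t : ℝ := Real.log x with ht_def
    have ht0 : 0 < t := lt_of_lt_of_le (by positivity) hlx
    have hcx' : c * t < Real.log (f x) := by
      have := (lt_div_iff₀ ht0).mp hcx
      linarith
    set N : ℕ := ⌈t / Real.log 2⌉₊ with hN_def
    have htd : 0 ≤ t / Real.log 2 := by positivity
    have h1 : t ≤ (N:ℝ) * Real.log 2 := by
      have h := Nat.le_ceil (t / Real.log 2)
      rw [div_le_iff₀ hlog2] at h
      exact h
    have h2 : (N:ℝ) * Real.log 2 ≤ t + Real.log 2 := by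
      have h := (Nat.ceil_lt_add_one htd).le
      have h' : (N:ℝ) * Real.log 2 ≤ (t / Real.log 2 + 1) * Real.log 2 :=
        mul_le_mul_of_nonneg_right h hlog2.le
      rw [add_mul, div_mul_cancel₀ _ (ne_of_gt hlog2), one_mul] at h'
      exact h'
    have hKN : K ≤ N := by
      have hK1 : ((K:ℝ)+1) ≤ t / Real.log 2 := by
        rw [le_div_iff₀ hlog2]; exact hlx
      have : ((K:ℝ)+1) ≤ (N:ℝ) := le_trans hK1 (Nat.le_ceil _)
      exact_mod_cast le_trans (by linarith : (K:ℝ) ≤ (K:ℝ)+1) this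
    have hNlog0 : (0:ℝ) ≤ (N:ℝ) * Real.log 2 := by positivity
    have habs : |(N:ℝ) * Real.log 2 - t| ≤ Real.log 2 := abs_le.mpr ⟨by linarith, by linarith⟩
    have hb := hglip t (le_of_lt ht0) ((N:ℝ) * Real.log 2) hNlog0
    have h3 : C * |(N:ℝ) * Real.log 2 - t| ≤ C * Real.log 2 :=
      mul_le_mul_of_nonneg_left habs hC0
    have h4 := (abs_le.mp hb).1
    -- g (N log 2) ≥ g t - C log 2
    have hNg : g t - C * Real.log 2 ≤ g ((N:ℝ) * Real.log 2) := by nlinarith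
    have hgt : g t = Real.log (f x) := by
      simp only [hg_def, ht_def, Real.exp_log hx0]
    have hct : c * ((N:ℝ) * Real.log 2 - Real.log 2) ≤ c * t :=
      mul_le_mul_of_nonneg_left (by linarith) hc.le
    refine ⟨N, hKN, ?_⟩
    have hrw : (2:ℝ) ^ (N:ℝ) = Real.exp ((N:ℝ) * Real.log 2) := by
      rw [Real.rpow_def_of_pos two_pos, mul_comm]
    rw [hrw]
    have : g ((N:ℝ) * Real.log 2) = Real.log (f (Real.exp ((N:ℝ) * Real.log 2))) := rfl
    rw [← this]
    have : c₁ * (N:ℝ) - D = c * ((N:ℝ) * Real.log 2 - Real.log 2) - C * Real.log 2 := by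
      simp only [hc₁_def, hD_def]; ring
    rw [this]
    have := hgt ▸ hNg
    linarith
  -- Step D: main argument
  rw [EReal.eq_top_iff_forall_lt]
  intro M
  set M' : ℝ := max (M + 1) 1 with hM'_def
  have hM'1 : (1:ℝ) ≤ M' := le_max_right _ _
  have hM'M : M + 1 ≤ M' := le_max_left _ _
  set F : ℕ → ℝ := fun m => f ((2:ℝ) ^ (m:ℝ)) with hF_def
  have hFpos : ∀ m : ℕ, 0 < F m := by
    intro m
    exact hpos _ (Real.one_le_rpow one_le_two (Nat.cast_nonneg m))
  have key : ∀ K : ℕ, ∃ n : ℕ, K ≤ n ∧ ((M':ℝ) : EReal) ≤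
      elog |f ((2:ℝ) ^ (n:ℝ)) - f ((2:ℝ) ^ ((n:ℝ) - 1))| / ((Real.log n : ℝ) : EReal) := by
    intro K
    set K' : ℕ := max K 2 with hK'_def
    have hK'2 : 2 ≤ K' := le_max_right _ _
    set P : ℝ := F K' with hP_def
    have hPpos : 0 < P := hFpos K'
    set E : ℝ := D + Real.log 2 + |Real.log (2 * P)| with hE_def
    have hED : D + Real.log 2 ≤ E := by
      have := abs_nonneg (Real.log (2 * P)); simp only [hE_def]; linarith
    -- eventual inequality over ℝ
    have hev : ∀ᶠ z : ℝ in atTop, (M' + 1) * Real.log z + E ≤ c₁ * z := by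
      have h1 : (fun z : ℝ => (M' + 1) * Real.log z) =o[atTop] id :=
        Real.isLittleO_log_id_atTop.const_mul_left (M' + 1)
      have h2 := h1.bound (half_pos hc₁)
      filter_upwards [h2, eventually_ge_atTop (1:ℝ),
        eventually_ge_atTop (2 * E / c₁)] with z hz hz1 hz2
      have hlz : 0 ≤ Real.log z := Real.log_nonneg hz1
      have hz0 : (0:ℝ) ≤ z := by linarith
      have hnorm : (M' + 1) * Real.log z ≤ c₁ / 2 * z := by
        have h' : |(M' + 1) * Real.log z| ≤ c₁ / 2 * z := by
          simpa [Real.norm_eq_abs, abs_of_nonneg hz0, abs_mul] using hz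
        exact le_trans (le_abs_self _) h'
      have hE2 : E ≤ c₁ / 2 * z := by
        have := mul_le_mul_of_nonneg_left hz2 (le_of_lt (half_pos hc₁))
        rw [mul_div_assoc] at this
        have h' : c₁ / 2 * (2 * E / c₁) = E := by field_simp
        nlinarith
      linarith
    have hevN : ∀ᶠ N : ℕ in atTop, (M' + 1) * Real.log N + E ≤ c₁ * N :=
      (tendsto_natCast_atTop_atTop (R := ℝ)).eventually hev
    obtain ⟨N₀, hN₀⟩ := eventually_atTop.mp hevN
    obtain ⟨N, hNge, hNgrow⟩ := hgrow (max (K' + 1) N₀)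
    have hNK' : K' + 1 ≤ N := le_trans (le_max_left _ _) hNge
    have hNN₀ : N₀ ≤ N := le_trans (le_max_right _ _) hNge
    have hNineq := hN₀ N hNN₀
    have hlogN0 : 0 ≤ Real.log N := Real.log_nonneg (by exact_mod_cast Nat.one_le_iff_ne_zero.mpr (by omega))
    have hFN : c₁ * N - D ≤ Real.log (F N) := hNgrow
    -- F N ≥ 2 P
    have h2P : 2 * P ≤ F N := by
      have hlog2P : Real.log (2 * P) ≤ Real.log (F N) := by
        have h1 : Real.log (2 * P) ≤ E - D - Real.log 2 := by
          have := le_abs_self (Real.log (2 * P)); simp only [hE_def]; linarith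
        have h2 : (M' + 1) * Real.log N ≥ 0 := by positivity
        linarith
      exact (Real.log_le_log_iff (by positivity) (hFpos N)).mp hlog2P
    set A : ℝ := F N - P with hA_def
    have hA2 : F N / 2 ≤ A := by simp only [hA_def]; linarith
    have hApos : 0 < A := lt_of_lt_of_le (half_pos (hFpos N)) hA2
    -- telescoping
    set L : ℕ := N - K' with hL_def
    have hL1 : 1 ≤ L := by omega
    have hKL : K' + L = N := by omega
    have hsum : ∑ i ∈ Finset.range L, (F (K' + i + 1) - F (K' + i)) = A := by
      have := Finset.sum_range_sub (fun i => F (K' + i)) L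
      simp only [hA_def, hP_def]
      rw [← hKL]
      simpa [add_assoc] using this
    have hle : A ≤ ∑ i ∈ Finset.range L, |F (K' + i + 1) - F (K' + i)| := by
      rw [← hsum]
      exact Finset.sum_le_sum (fun i _ => le_abs_self _)
    have hLne : ((L:ℕ):ℝ) ≠ 0 := by exact_mod_cast by omega
    have hconst : ∑ _i ∈ Finset.range L, A / (L:ℝ) = A := by
      rw [Finset.sum_const, Finset.card_range, nsmul_eq_mul, mul_comm,
        div_mul_cancel₀ _ hLne]
    have hsum_le : ∑ _i ∈ Finset.range L, A / (L:ℝ) ≤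
        ∑ i ∈ Finset.range L, |F (K' + i + 1) - F (K' + i)| := by
      rw [hconst]; exact hle
    obtain ⟨i, hi, hile⟩ := Finset.exists_le_of_sum_le
      (Finset.nonempty_range_iff.mpr (by omega)) hsum_le
    set n : ℕ := K' + i + 1 with hn_def
    have hiL : i < L := Finset.mem_range.mp hi
    have hnN : n ≤ N := by omega
    have hnK : K ≤ n := by
      have : K ≤ K' := le_max_left _ _
      omega
    have hn2 : 2 ≤ n := by omega
    have hlogn_pos : 0 < Real.log n :=
      Real.log_pos (by exact_mod_cast by omega : (1:ℝ) < (n:ℕ))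
    -- identify the dyadic difference
    have hcast : ((n:ℝ) - 1) = ((K' + i : ℕ) : ℝ) := by
      simp only [hn_def]; push_cast; ring
    have hd_eq : f ((2:ℝ) ^ (n:ℝ)) - f ((2:ℝ) ^ ((n:ℝ) - 1)) = F n - F (K' + i) := by
      rw [hcast]
    set dn : ℝ := f ((2:ℝ) ^ (n:ℝ)) - f ((2:ℝ) ^ ((n:ℝ) - 1)) with hdn_def
    have hdn_abs : A / N ≤ |dn| := by
      have h1 : A / (N:ℝ) ≤ A / (L:ℝ) := by
        apply div_le_div_of_nonneg_left hApos.le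
        · exact_mod_cast by omega
        · exact_mod_cast by omega
      have h2 : |dn| = |F n - F (K' + i)| := by rw [hd_eq]
      rw [h2]
      exact le_trans h1 hile
    have hN0R : (0:ℝ) < (N:ℝ) := by exact_mod_cast by omega
    have hdn_pos : 0 < |dn| := lt_of_lt_of_le (by positivity) hdn_abs
    have hdn_ne : dn ≠ 0 := by
      intro h; rw [h, abs_zero] at hdn_pos; exact lt_irrefl _ hdn_pos
    -- main numeric estimate
    have hlog_dn : M' * Real.log n ≤ Real.log |dn| := by
      have s1 : Real.log (A / N) ≤ Real.log |dn| :=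
        Real.log_le_log (div_pos hApos hN0R) hdn_abs
      have s2 : Real.log (A / N) = Real.log A - Real.log N :=
        Real.log_div (ne_of_gt hApos) (ne_of_gt hN0R)
      have s3 : Real.log (F N / 2) ≤ Real.log A :=
        Real.log_le_log (half_pos (hFpos N)) hA2
      have s4 : Real.log (F N / 2) = Real.log (F N) - Real.log 2 :=
        Real.log_div (ne_of_gt (hFpos N)) two_ne_zero
      have s5 : M' * Real.log n ≤ M' * Real.log N := by
        apply mul_le_mul_of_nonneg_left _ (by linarith : (0:ℝ) ≤ M')
        apply Real.log_le_log (by exact_mod_cast by omega : (0:ℝ) < (n:ℕ))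
        exact_mod_cast hnN
      -- from hNineq : (M'+1) log N + E ≤ c₁ N and hED : D + log 2 ≤ E
      have s6 : (M' + 1) * Real.log N + D + Real.log 2 ≤ c₁ * N := by linarith
      linarith
    -- conclude in EReal
    refine ⟨n, hnK, ?_⟩
    have helog : elog |dn| = ((Real.log |dn| : ℝ) : EReal) := by
      simp [elog, ne_of_gt hdn_pos]
    rw [← hdn_def, helog, ← EReal.coe_div, EReal.coe_le_coe_iff]
    rw [le_div_iff₀ hlogn_pos]
    exact hlog_dn
  have hfreq2 : ∃ᶠ n : ℕ in atTop, ((M':ℝ) : EReal) ≤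
      elog |f ((2:ℝ) ^ (n:ℝ)) - f ((2:ℝ) ^ ((n:ℝ) - 1))| / ((Real.log n : ℝ) : EReal) :=
    frequently_atTop.mpr (fun K => by
      obtain ⟨n, hn1, hn2⟩ := key K; exact ⟨n, hn1, hn2⟩)
  have hle := le_limsup_of_frequently_le' hfreq2
  calc ((M:ℝ) : EReal) < ((M':ℝ) : EReal) := by
        exact_mod_cast lt_of_lt_of_le (lt_add_one M) hM'M
    _ ≤ _ := hle
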